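/- Every left-resolving labelled graph gives rise to a regular labelled space: if (E, L) is left-resolving and B is any accommodating collection of subsets of E^0, then the labelled space (E, L, B) is regular. -/

import Mathlib

/-- A labelled graph: a directed graph with source, range maps and a labelling of edges. -/
structure LabelledGraph (V E A : Type*) where
  src : E → V
  rng : E → V
  lab : E → A

namespace LabelledGraph

variable {V E A : Type*}

/-- `es` is a (nonempty, composable) path of edges. -/
def IsPath (G : LabelledGraph V E A) (es : List E) : Prop :=
  es ≠ [] ∧ es.Chain' (fun e f => G.rng e = G.src f)

/-- The relative range `r(S, α)`: ranges of paths labelled `α` whose source lies in `S`. -/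
def relRange (G : LabelledGraph V E A) (S : Set V) (α : List A) : Set V :=
  { w | ∃ es : List E, G.IsPath es ∧ es.map G.lab = α ∧
        (∀ e ∈ es.head?, G.src e ∈ S) ∧ ∃ e ∈ es.getLast?, G.rng e = w }

/-- `α` is a labelled path if it is the label of some path in the graph. -/
def IsLabelledPath (G : LabelledGraph V E A) (α : List A) : Prop :=
  (G.relRange Set.univ α).Nonempty

/-- The graph is left-resolving: the labelling is injective on edges into each vertex. -/
def LeftResolving (G : LabelledGraph V E A) : Prop :=
  ∀ e f : E, G.rng e = G.rng f → G.lab e = G.lab f → e = f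

/-- `L(S E¹)`, the set of labels of edges emitted from `S`. -/
def labelsFrom (G : LabelledGraph V E A) (S : Set V) : Set A :=
  G.lab '' (G.src ⁻¹' S)

/-- A sink: a vertex emitting no edges. -/
def IsSink (G : LabelledGraph V E A) (v : V) : Prop := ∀ e : E, G.src e ≠ v

/-- `𝓑` is accommodating for `G`. -/
def Accommodating (G : LabelledGraph V E A) (𝓑 : Set (Set V)) : Prop :=
  (∀ S ∈ 𝓑, ∀ α : List A, G.IsLabelledPath α → G.relRange S α ∈ 𝓑) ∧
  (∀ α : List A, G.IsLabelledPath α → G.relRange Set.univ α ∈ 𝓑) ∧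
  (∀ S ∈ 𝓑, ∀ T ∈ 𝓑, S ∩ T ∈ 𝓑) ∧
  (∀ S ∈ 𝓑, ∀ T ∈ 𝓑, S ∪ T ∈ 𝓑)

/-- The labelled space `(E, L, 𝓑)` is weakly left-resolving. -/
def WeaklyLeftResolving (G : LabelledGraph V E A) (𝓑 : Set (Set V)) : Prop :=
  ∀ S ∈ 𝓑, ∀ T ∈ 𝓑, ∀ α : List A, G.IsLabelledPath α →
    G.relRange (S ∩ T) α = G.relRange S α ∩ G.relRange T α

/-- The labelled space `(E, L, 𝓑)` is regular. -/
def Regular (G : LabelledGraph V E A) (𝓑 : Set (Set V)) : Prop :=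
  ∀ S ∈ 𝓑, ∀ T ∈ 𝓑,
    G.labelsFrom S = G.labelsFrom T → (G.labelsFrom S).Finite →
    (∀ v ∈ S, ¬ G.IsSink v) → (∀ v ∈ T, ¬ G.IsSink v) →
    (∀ a ∈ G.labelsFrom S, G.relRange S [a] = G.relRange T [a]) →
    S = T

end LabelledGraph

lemma LabelledGraph.mem_relRange_single {V E A : Type*} (G : LabelledGraph V E A)
    (S : Set V) (a : A) (w : V) :
    w ∈ G.relRange S [a] ↔ ∃ e : E, G.lab e = a ∧ G.src e ∈ S ∧ G.rng e = w := by
  constructor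
  · rintro ⟨es, -, hmap, hhead, f, hf, hrng⟩
    match es, hmap, hhead, hf with
    | [e], hmap, hhead, hf =>
      simp only [List.map_cons, List.map_nil, List.cons.injEq] at hmap
      simp only [List.head?_cons, Option.mem_def, Option.some.injEq] at hhead
      simp only [List.getLast?_singleton, Option.mem_def, Option.some.injEq] at hf
      exact ⟨e, hmap.1, hhead e rfl, hf ▸ hrng⟩
    | e :: f :: rest, hmap, _, _ => simp at hmap
  · rintro ⟨e, hlab, hsrc, hrng⟩
    exact ⟨[e], ⟨by simp, List.isChain_singleton _⟩, by simp [hlab], by simpa using hsrc, e, by simp, hrng⟩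

theorem stmt3 {V E A : Type*} (G : LabelledGraph V E A) (hG : G.LeftResolving)
    (𝓑 : Set (Set V)) (hacc : G.Accommodating 𝓑) :
    G.Regular 𝓑 := by
  intro S hS T hT hlabels hfin hsinkS hsinkT hrel
  have key : ∀ (S T : Set V), G.labelsFrom S = G.labelsFrom T →
      (∀ v ∈ S, ¬ G.IsSink v) →
      (∀ a ∈ G.labelsFrom S, G.relRange S [a] = G.relRange T [a]) →
      S ⊆ T := by
    intro S T hlab hsink hrel v hv
    obtain ⟨e, he⟩ : ∃ e : E, G.src e = v := by
      by_contra h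
      push_neg at h
      exact hsink v hv (fun e => h e)
    have ha : G.lab e ∈ G.labelsFrom S := ⟨e, by simp [he, hv], rfl⟩
    have hmem : G.rng e ∈ G.relRange S [G.lab e] :=
      (G.mem_relRange_single S _ _).2 ⟨e, rfl, by simp [he, hv], rfl⟩
    rw [hrel _ ha] at hmem
    obtain ⟨f, hfl, hfs, hfr⟩ := (G.mem_relRange_single T _ _).1 hmem
    have : e = f := hG e f hfr.symm hfl.symm
    rw [← he, this]
    exact hfs
  refine Set.Subset.antisymm (key S T hlabels hsinkS hrel) (key T S hlabels.symm hsinkT ?_)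
  intro a ha
  exact (hrel a (hlabels ▸ ha)).symm
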